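/- In the autonomy-aware clustering setup with squared Euclidean cost and autonomy independent of Y, suppose every cluster mass p_πρ^{Y(t)}(ℓ) is strictly positive. Then one simultaneous pass of the fixed-point iteration—computing π_{Y(t)}^β(j|i) = softmax_j(−β d_avg(x_i, y_j(t))) and then setting y_ℓ(t+1) = (Σ_i Σ_j ρ(i) p(ℓ|j,i) π_{Y(t)}^β(j|i) x_i) / (Σ_i Σ_j ρ(i) p(ℓ|j,i) π_{Y(t)}^β(j|i)) for every ℓ—is exactly the preconditioned gradient-descent step Y(t+1) = Y(t) − (1/2) (P̂_πρ^{Y(t)})^{−1} ∇F(Y(t)), where P̂_πρ^{Y(t)} = P_πρ^{Y(t)} ⊗ I_d and P_πρ^{Y(t)} ∈ ℝ^{K×K} is the diagonal matrix with entries [P_πρ^{Y(t)}]_{ℓℓ} = p_πρ^{Y(t)}(ℓ) = Σ_{i,j} ρ(i) π_{Y(t)}^β(j|i) p(ℓ|j,i). -/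

import Mathlib

set_option maxHeartbeats 1000000


/-- One simultaneous pass of the fixed-point iteration (Gibbs policy followed
by the weighted-centroid update) equals the preconditioned gradient-descent step
`Y(t+1) = Y(t) − (1/2) (P̂_πρ^{Y(t)})⁻¹ ∇F(Y(t))`, where `P̂_πρ^{Y(t)} = P_πρ^{Y(t)} ⊗ I_d`
is block-diagonal with the cluster masses on the diagonal; blockwise this means
`y_ℓ(t+1) = y_ℓ(t) − (1/2) (p_πρ^{Y(t)}(ℓ))⁻¹ (∇F(Y(t)))_ℓ` for every `ℓ`. -/
theorem stmt_3 (N K d : ℕ) (β : ℝ) (hβ : 0 < β)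
    (x : Fin N → EuclideanSpace ℝ (Fin d)) (ρ : Fin N → ℝ)
    (hρ : ∀ i, 0 ≤ ρ i) (hρ1 : ∑ i, ρ i = 1)
    (p : Fin K → Fin K → Fin N → ℝ)
    (hp : ∀ k j i, 0 ≤ p k j i) (hp1 : ∀ j i, ∑ k, p k j i = 1)
    (davg : (PiLp 2 fun _ : Fin K => EuclideanSpace ℝ (Fin d)) → Fin N → Fin K → ℝ)
    (hdavg : ∀ Y i j, davg Y i j = ∑ k, p k j i * ‖x i - Y k‖ ^ 2)
    (πpol : (PiLp 2 fun _ : Fin K => EuclideanSpace ℝ (Fin d)) → Fin K → Fin N → ℝ)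
    (hπ : ∀ Y j i, πpol Y j i =
      Real.exp (-β * davg Y i j) / ∑ ℓ, Real.exp (-β * davg Y i ℓ))
    (F : (PiLp 2 fun _ : Fin K => EuclideanSpace ℝ (Fin d)) → ℝ)
    (hF : ∀ Y, F Y = -(1 / β) * ∑ i, ρ i * Real.log (∑ j, Real.exp (-β * davg Y i j)))
    (Y : PiLp 2 fun _ : Fin K => EuclideanSpace ℝ (Fin d))
    (mass : Fin K → ℝ)
    (hmassdef : ∀ ℓ, mass ℓ = ∑ i, ∑ j, ρ i * πpol Y j i * p ℓ j i)
    (hmasspos : ∀ ℓ, 0 < mass ℓ)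
    (Ynext : PiLp 2 fun _ : Fin K => EuclideanSpace ℝ (Fin d))
    (hYnext : ∀ ℓ, Ynext ℓ = (∑ i, ∑ j, ρ i * p ℓ j i * πpol Y j i)⁻¹ •
        ∑ i, ∑ j, (ρ i * p ℓ j i * πpol Y j i) • x i) :
    ∀ ℓ, Ynext ℓ = Y ℓ - ((1 / 2) * (mass ℓ)⁻¹) • gradient F Y ℓ := by
  intro ℓ
  have hK : Nonempty (Fin K) := ⟨ℓ⟩
  have hspos : ∀ i, (0:ℝ) < ∑ j, Real.exp (-β * ∑ k, p k j i * ‖x i - Y k‖ ^ 2) :=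
    fun i => Finset.sum_pos (fun j _ => Real.exp_pos _) Finset.univ_nonempty
  have hspos' : ∀ i, (0:ℝ) < ∑ j, Real.exp (-β * davg Y i j) := by
    intro i
    simp only [hdavg]
    exact hspos i
  -- the claimed gradient
  set G : PiLp 2 fun _ : Fin K => EuclideanSpace ℝ (Fin d) :=
    WithLp.toLp 2 (fun k => (2:ℝ) • ∑ i, ∑ j, (ρ i * p k j i * πpol Y j i) • (Y k - x i)) with hGdef
  -- derivative of the squared-distance pieces
  have hnsq : ∀ (i : Fin N) (k : Fin K),
      HasFDerivAt
        (fun Z : PiLp 2 (fun _ : Fin K => EuclideanSpace ℝ (Fin d)) => ‖x i - Z k‖ ^ 2)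
        ((fderivInnerCLM ℝ (x i - Y k, x i - Y k)).comp
          ((-(PiLp.proj (𝕜 := ℝ) 2 (fun _ : Fin K => EuclideanSpace ℝ (Fin d)) k)).prod
            (-(PiLp.proj (𝕜 := ℝ) 2 (fun _ : Fin K => EuclideanSpace ℝ (Fin d)) k)))) Y := by
    intro i k
    have h0 : HasFDerivAt
        (fun Z : PiLp 2 (fun _ : Fin K => EuclideanSpace ℝ (Fin d)) => Z k)
        (PiLp.proj (𝕜 := ℝ) 2 (fun _ : Fin K => EuclideanSpace ℝ (Fin d)) k) Y := by
      exact PiLp.hasFDerivAt_apply (𝕜 := ℝ) 2 Y k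
    have h1 := h0.const_sub (x i)
    have h2 := h1.inner ℝ h1
    simpa only [real_inner_self_eq_norm_sq] using h2
  have hD := HasFDerivAt.const_mul (HasFDerivAt.fun_sum (u := Finset.univ) (fun i _ =>
      HasFDerivAt.const_mul
        (HasFDerivAt.log
          (HasFDerivAt.fun_sum (u := Finset.univ) (fun j _ =>
            HasFDerivAt.exp
              (HasFDerivAt.const_mul
                (HasFDerivAt.fun_sum (u := Finset.univ) (fun k _ =>
                  HasFDerivAt.const_mul (hnsq i k) (p k j i))) (-β))))
          (hspos i).ne')
        (ρ i))) (-(1/β))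
  have hFeq : F = fun Z : PiLp 2 (fun _ : Fin K => EuclideanSpace ℝ (Fin d)) =>
      -(1/β) * ∑ i, ρ i * Real.log (∑ j, Real.exp (-β * ∑ k, p k j i * ‖x i - Z k‖ ^ 2)) := by
    funext Z
    simp only [hF, hdavg]
  have hgrad : HasGradientAt F G Y := by
    rw [hasGradientAt_iff_hasFDerivAt, hFeq]
    refine hD.congr_fderiv ?_
    ext h
    rw [InnerProductSpace.toDual_apply_apply, PiLp.inner_apply]
    simp only [ContinuousLinearMap.smul_apply, ContinuousLinearMap.coe_sum',
      Finset.sum_apply, ContinuousLinearMap.comp_apply, ContinuousLinearMap.prod_apply,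
      ContinuousLinearMap.neg_apply, fderivInnerCLM_apply, PiLp.proj_apply,
      smul_eq_mul, hGdef, PiLp.toLp_apply, sum_inner, real_inner_smul_left]
    have hinner : ∀ (a c : EuclideanSpace ℝ (Fin d)),
        (inner ℝ a (-c) : ℝ) + inner ℝ (-c) a = (-2 : ℝ) * inner ℝ a c := by
      intro a c
      rw [inner_neg_right, inner_neg_left, real_inner_comm]
      ring
    simp only [← hdavg, hinner, Finset.mul_sum]
    conv_rhs => rw [Finset.sum_comm]
    refine Finset.sum_congr rfl fun i _ => ?_
    rw [Finset.sum_comm]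
    refine Finset.sum_congr rfl fun k _ => Finset.sum_congr rfl fun j _ => ?_
    rw [hπ Y j i, ← neg_sub (x i) (Y k), inner_neg_left]
    have hs := (hspos' i).ne'
    have hb := hβ.ne'
    field_simp
  have hkey : gradient F Y = G := hgrad.gradient
  rw [hYnext ℓ, hkey]
  have hmass' : ∑ i, ∑ j, ρ i * p ℓ j i * πpol Y j i = mass ℓ := by
    rw [hmassdef]
    exact Finset.sum_congr rfl fun i _ => Finset.sum_congr rfl fun j _ => by ring
  rw [hmass']
  have hGl : G ℓ = (2:ℝ) • (mass ℓ • Y ℓ - ∑ i, ∑ j, (ρ i * p ℓ j i * πpol Y j i) • x i) := by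
    rw [hGdef]
    simp only [PiLp.toLp_apply, smul_sub, Finset.sum_sub_distrib, ← Finset.sum_smul]
    rw [hmass']
  rw [hGl, smul_smul, show (1/2 * (mass ℓ)⁻¹) * 2 = (mass ℓ)⁻¹ by ring, smul_sub, smul_smul,
    inv_mul_cancel₀ (hmasspos ℓ).ne', one_smul]
  abel
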